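/- For every β₀ ∈ [0, ∞] (extended reals), the level set Ω_{β₀} = {ω ∈ ℝ : β(ω) = β₀} is dense in ℝ. -/

import Mathlib

open Real Filter

noncomputable def distToInt (x : ℝ) : ℝ := |x - round x|

lemma distToInt_nonneg (x : ℝ) : 0 ≤ distToInt x := abs_nonneg _

lemma distToInt_le (x : ℝ) (z : ℤ) : distToInt x ≤ |x - z| := by
  rw [distToInt, abs_sub_round_eq_min]
  rcases le_or_gt z ⌊x⌋ with h | h
  · refine (min_le_left _ _).trans ?_
    have h1 : (z:ℝ) ≤ ⌊x⌋ := by exact_mod_cast h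
    have h2 := Int.fract_nonneg x
    rw [Int.fract] at h2 ⊢
    rw [abs_of_nonneg (by linarith)]
    linarith
  · refine (min_le_right _ _).trans ?_
    have h1 : (⌊x⌋:ℝ) + 1 ≤ z := by exact_mod_cast h
    have h2 := Int.fract_lt_one x
    rw [Int.fract] at h2 ⊢
    rw [abs_sub_comm, abs_of_nonneg (by linarith)]
    linarith

lemma distToInt_int_add (z : ℤ) (x : ℝ) : distToInt ((z:ℝ) + x) = distToInt x := by
  rw [distToInt, add_comm, round_add_intCast]
  rw [distToInt]
  congr 1
  push_cast
  ring

lemma distToInt_intCast (z : ℤ) : distToInt (z:ℝ) = 0 := by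
  have := distToInt_int_add z 0
  simpa [distToInt] using this

lemma distToInt_eq_self {t : ℝ} (h0 : 0 ≤ t) (h1 : t ≤ 1/2) : distToInt t = t := by
  rcases lt_or_eq_of_le h1 with h | h
  · rw [distToInt, round_eq, show ⌊t + 1/2⌋ = 0 by
      rw [Int.floor_eq_zero_iff]; constructor <;> simp <;> linarith]
    simpa using abs_of_nonneg h0
  · rw [h, distToInt, round_eq]
    norm_num

lemma one_div_le_distToInt (z : ℤ) (q : ℕ) (hq : 0 < q) (h : ¬ ((q:ℤ) ∣ z)) :
    1/(q:ℝ) ≤ distToInt ((z:ℝ)/(q:ℝ)) := by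
  set r := round ((z:ℝ)/(q:ℝ)) with hr
  have hq' : (0:ℝ) < q := by exact_mod_cast hq
  have hne : z - q * r ≠ 0 := by
    intro hzero
    exact h ⟨r, by omega⟩
  have key : (1:ℝ) ≤ |(z:ℝ) - q * r| := by
    have := Int.one_le_abs hne
    calc (1:ℝ) ≤ ((|z - q*r| : ℤ) : ℝ) := by exact_mod_cast this
    _ = |(z:ℝ) - q*r| := by push_cast; ring_nf
  have heq : distToInt ((z:ℝ)/(q:ℝ)) = |(z:ℝ) - q*r| / q := by
    rw [distToInt, ← hr]
    rw [show (z:ℝ)/(q:ℝ) - r = ((z:ℝ) - q*r)/q by field_simp]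
    rw [abs_div, abs_of_pos hq']
  rw [heq]
  gcongr

lemma distToInt_sub_le (x h : ℝ) : distToInt x - |h| ≤ distToInt (x + h) := by
  have h1 : distToInt x ≤ |x - round (x + h)| := distToInt_le x _
  have h2 : |x - round (x+h)| ≤ |x + h - round (x+h)| + |h| := by
    have := abs_add_le (x + h - round (x+h)) (-h)
    simpa [sub_eq_add_neg, add_assoc, add_comm, add_left_comm] using this
  simp only [distToInt] at h1 ⊢
  linarith [h1, h2]

/-- The recursive exponent sequence. -/
noncomputable def aseq (b : ℝ) (m : ℕ) : ℕ → ℕ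
  | 0 => m
  | k+1 => ⌈b * 2 ^ aseq b m k⌉₊ + 2 * aseq b m k + 2

lemma aseq_succ (b : ℝ) (m k : ℕ) :
    aseq b m (k+1) = ⌈b * 2 ^ aseq b m k⌉₊ + 2 * aseq b m k + 2 := rfl

lemma aseq_gap (b : ℝ) (m k : ℕ) : 2 * aseq b m k + 2 ≤ aseq b m (k+1) := by
  rw [aseq_succ]; omega

lemma aseq_lt_succ (b : ℝ) (m k : ℕ) : aseq b m k < aseq b m (k+1) := by
  have := aseq_gap b m k; omega

lemma aseq_strictMono (b : ℝ) (m : ℕ) : StrictMono (aseq b m) :=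
  strictMono_nat_of_lt_succ (aseq_lt_succ b m)

lemma le_aseq (b : ℝ) (m k : ℕ) : k ≤ aseq b m k := (aseq_strictMono b m).le_apply

lemma aseq_add_le (b : ℝ) (m k j : ℕ) : aseq b m k + j ≤ aseq b m (k + j) := by
  induction j with
  | zero => simp
  | succ j ih =>
      have h1 := aseq_lt_succ b m (k + j)
      have e : k + (j+1) = (k+j)+1 := by omega
      rw [e]
      omega

lemma summable_pay (b : ℝ) (m k : ℕ) :
    Summable (fun j : ℕ => ((1:ℝ)/2) ^ aseq b m (k + j)) := by
  refine Summable.of_nonneg_of_le (fun j => by positivity) (fun j => ?_)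
    ((summable_geometric_two).mul_left ((1/2 : ℝ) ^ (aseq b m k)))
  rw [← pow_add]
  exact pow_le_pow_of_le_one (by norm_num) (by norm_num) (aseq_add_le b m k j)

/-- Tail sum `∑_{j > k} 2^{-a_j}`. -/
noncomputable def tailS (b : ℝ) (m k : ℕ) : ℝ := ∑' j : ℕ, ((1:ℝ)/2) ^ aseq b m (k + 1 + j)

lemma tailS_lb (b : ℝ) (m k : ℕ) : ((1:ℝ)/2) ^ (aseq b m (k+1)) ≤ tailS b m k := by
  have h := Summable.le_tsum (summable_pay b m (k+1)) 0 (fun j _ => by positivity)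
  exact h

lemma tailS_pos (b : ℝ) (m k : ℕ) : 0 < tailS b m k :=
  lt_of_lt_of_le (by positivity) (tailS_lb b m k)

lemma tailS_ub (b : ℝ) (m k : ℕ) : tailS b m k ≤ ((1:ℝ)/2) ^ (aseq b m (k+1)) * 2 := by
  have h1 : tailS b m k ≤ ∑' j : ℕ, ((1:ℝ)/2) ^ (aseq b m (k+1)) * (1/2) ^ j := by
    apply Summable.tsum_le_tsum _ (summable_pay b m (k+1)) ((summable_geometric_two).mul_left _)
    intro j
    rw [← pow_add]
    exact pow_le_pow_of_le_one (by norm_num) (by norm_num) (aseq_add_le b m (k+1) j)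
  calc tailS b m k ≤ _ := h1
    _ = ((1:ℝ)/2) ^ (aseq b m (k+1)) * 2 := by
        rw [tsum_mul_left, tsum_geometric_two]

lemma tailS_succ (b : ℝ) (m k : ℕ) :
    tailS b m k = ((1:ℝ)/2) ^ (aseq b m (k+1)) + tailS b m (k+1) := by
  rw [tailS, Summable.tsum_eq_zero_add (summable_pay b m (k+1))]
  congr 1
  rw [tailS]
  apply tsum_congr
  intro j
  congr 2
  omega

/-- Numerators of the dyadic convergents. -/
noncomputable def pnum (c : ℤ) (b : ℝ) (m : ℕ) : ℕ → ℤ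
  | 0 => c
  | k+1 => pnum c b m k * 2 ^ (aseq b m (k+1) - aseq b m k) + 1

/-- The constructed Liouville-type number. -/
noncomputable def lnum (c : ℤ) (b : ℝ) (m : ℕ) : ℝ := (c:ℝ) * (1/2)^m + tailS b m 0

lemma lnum_conv (c : ℤ) (b : ℝ) (m k : ℕ) :
    lnum c b m = (pnum c b m k : ℝ) * ((1:ℝ)/2) ^ (aseq b m k) + tailS b m k := by
  induction k with
  | zero => rfl
  | succ k ih =>
      rw [ih, tailS_succ b m k]
      have hle : aseq b m k ≤ aseq b m (k+1) := (aseq_lt_succ b m k).le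
      have hp : (pnum c b m (k+1) : ℝ)
          = (pnum c b m k : ℝ) * 2 ^ (aseq b m (k+1) - aseq b m k) + 1 := by
        rw [show pnum c b m (k+1) = pnum c b m k * 2 ^ (aseq b m (k+1) - aseq b m k) + 1 from rfl]
        push_cast
        ring
      set d := aseq b m (k+1) - aseq b m k with hdd
      have hd : aseq b m (k+1) = aseq b m k + d := by omega
      rw [hp]
      rw [hd, pow_add]
      have h2 : ((1:ℝ)/2) ^ d * 2 ^ d = 1 := by
        rw [div_pow, one_pow, div_mul_cancel₀]
        positivity
      calc (pnum c b m k : ℝ) * (1/2) ^ aseq b m k + ((1/2) ^ aseq b m k * (1/2) ^ d + tailS b m (k+1))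
          = (pnum c b m k : ℝ) * (1/2) ^ aseq b m k * ((1/2)^d * 2^d)
            + (1/2) ^ aseq b m k * (1/2) ^ d + tailS b m (k+1) := by rw [h2]; ring
        _ = ((pnum c b m k : ℝ) * 2 ^ d + 1) * ((1/2) ^ aseq b m k * (1/2) ^ d) + tailS b m (k+1) := by ring

lemma pnum_odd (c : ℤ) (b : ℝ) (m k : ℕ) : ¬ (2:ℤ) ∣ pnum c b m (k+1) := by
  have hd : aseq b m (k+1) - aseq b m k ≠ 0 := by
    have := aseq_lt_succ b m k; omega
  have h2 : (2:ℤ) ∣ 2 ^ (aseq b m (k+1) - aseq b m k) := dvd_pow_self 2 hd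
  rw [show pnum c b m (k+1) = pnum c b m k * 2 ^ (aseq b m (k+1) - aseq b m k) + 1 from rfl]
  intro hdvd
  have h3 : (2:ℤ) ∣ pnum c b m k * 2 ^ (aseq b m (k+1) - aseq b m k) :=
    Dvd.dvd.mul_left h2 _
  have : (2:ℤ) ∣ 1 := (dvd_add_right h3).mp hdvd
  norm_num at this

lemma pow_mul_pow_inv (a : ℕ) : (2:ℝ)^a * (1/2)^a = 1 := by
  rw [div_pow, one_pow]
  field_simp

lemma pow_half_mul (a a' : ℕ) (h : a ≤ a') : (2:ℝ)^a * ((1:ℝ)/2)^a' = ((1:ℝ)/2)^(a' - a) := by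
  have e : a' = a + (a' - a) := by omega
  calc (2:ℝ)^a * (1/2)^a' = (2:ℝ)^a * ((1/2)^a * (1/2)^(a'-a)) := by rw [← pow_add, ← e]
    _ = (1/2)^(a'-a) := by rw [← mul_assoc, pow_mul_pow_inv, one_mul]

lemma qtail_lb (c : ℤ) (b : ℝ) (m k : ℕ) :
    ((1:ℝ)/2)^(aseq b m (k+1) - aseq b m k) ≤ (2:ℝ)^(aseq b m k) * tailS b m k := by
  have h0 : (0:ℝ) ≤ 2^(aseq b m k) := by positivity
  have h := mul_le_mul_of_nonneg_left (tailS_lb b m k) h0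
  rwa [pow_half_mul _ _ (aseq_lt_succ b m k).le] at h

lemma qtail_ub (c : ℤ) (b : ℝ) (m k : ℕ) :
    (2:ℝ)^(aseq b m k) * tailS b m k ≤ ((1:ℝ)/2)^(aseq b m (k+1) - aseq b m k - 1) := by
  have h0 : (0:ℝ) ≤ 2^(aseq b m k) := by positivity
  have h := mul_le_mul_of_nonneg_left (tailS_ub b m k) h0
  rw [← mul_assoc, pow_half_mul _ _ (aseq_lt_succ b m k).le] at h
  refine h.trans ?_
  have hgap := aseq_gap b m k
  obtain ⟨D, hD⟩ : ∃ D, aseq b m (k+1) - aseq b m k = D + 1 := ⟨aseq b m (k+1) - aseq b m k - 1, by omega⟩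
  rw [hD, Nat.add_sub_cancel, pow_succ]
  exact le_of_eq (by ring)

lemma qtail_le_half (c : ℤ) (b : ℝ) (m k : ℕ) :
    (2:ℝ)^(aseq b m k) * tailS b m k ≤ 1/2 := by
  refine (qtail_ub c b m k).trans ?_
  have hgap := aseq_gap b m k
  calc ((1:ℝ)/2)^(aseq b m (k+1) - aseq b m k - 1) ≤ ((1:ℝ)/2)^1 :=
      pow_le_pow_of_le_one (by norm_num) (by norm_num) (by omega)
    _ = 1/2 := pow_one _

/-- Estimate (A): exact value of `‖2^{a_k} ω‖`. -/
lemma estA (c : ℤ) (b : ℝ) (m k : ℕ) :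
    distToInt ((2:ℝ)^(aseq b m k) * lnum c b m) = (2:ℝ)^(aseq b m k) * tailS b m k := by
  have key : (2:ℝ)^(aseq b m k) * lnum c b m
      = (pnum c b m k : ℝ) + (2:ℝ)^(aseq b m k) * tailS b m k := by
    rw [lnum_conv c b m k]
    rw [mul_add, ← mul_assoc, mul_comm ((2:ℝ)^(aseq b m k)) _, mul_assoc,
      pow_mul_pow_inv, mul_one]
  rw [key, distToInt_int_add]
  refine distToInt_eq_self ?_ (qtail_le_half c b m k)
  exact mul_nonneg (by positivity) (tailS_pos b m k).le

/-- Estimate (B): lower bound for `‖n ω‖` for all `1 ≤ n < 2^{a_{k+1}}`. -/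
lemma estB (c : ℤ) (b : ℝ) (m k : ℕ) (n : ℕ) (h1 : 1 ≤ n) (h2 : n < 2 ^ aseq b m (k+1)) :
    ((1:ℝ)/2)^(aseq b m (k+1) + 1) ≤ distToInt ((n:ℝ) * lnum c b m) := by
  set A := aseq b m (k+1) with hA
  have key : (n:ℝ) * lnum c b m
      = ((n * pnum c b m (k+1) : ℤ) : ℝ) / ((2^A : ℕ) : ℝ) + (n:ℝ) * tailS b m (k+1) := by
    rw [lnum_conv c b m (k+1), mul_add]
    congr 1
    push_cast
    rw [div_pow, one_pow]
    field_simp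
    rw [hA]
  have hnd : ¬ ((2^A : ℕ) : ℤ) ∣ (n * pnum c b m (k+1) : ℤ) := by
    intro hdvd
    have hodd := pnum_odd c b m k
    have hcop : IsCoprime ((2:ℤ)^A) (pnum c b m (k+1)) :=
      (Int.prime_two.coprime_iff_not_dvd.mpr hodd).pow_left
    have hdvd' : ((2:ℤ)^A) ∣ (n : ℤ) := by
      refine hcop.dvd_of_dvd_mul_right ?_
      push_cast at hdvd ⊢
      exact hdvd
    have hnat : (2^A : ℕ) ∣ n := by exact_mod_cast hdvd'
    have := Nat.le_of_dvd (by omega) hnat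
    omega
  have hq : 0 < 2^A := Nat.pow_pos (n := A) (by norm_num)
  have hlow : 1 / ((2^A : ℕ) : ℝ)
      ≤ distToInt (((n * pnum c b m (k+1) : ℤ) : ℝ) / ((2^A : ℕ) : ℝ)) :=
    one_div_le_distToInt _ _ hq hnd
  have hgap := aseq_gap b m (k+1)
  have hn : (n:ℝ) ≤ (2:ℝ)^A := by
    calc (n:ℝ) ≤ ((2^A : ℕ) : ℝ) := by exact_mod_cast h2.le
      _ = (2:ℝ)^A := by push_cast; ring
  have hpert : (n:ℝ) * tailS b m (k+1) ≤ ((1:ℝ)/2)^(A + 1) := by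
    calc (n:ℝ) * tailS b m (k+1)
        ≤ (2:ℝ)^A * (((1:ℝ)/2)^(aseq b m (k+1+1)) * 2) :=
          mul_le_mul hn (tailS_ub b m (k+1)) (tailS_pos b m (k+1)).le (by positivity)
      _ = ((1:ℝ)/2)^(aseq b m (k+1+1) - A) * 2 := by
          rw [← mul_assoc, pow_half_mul A _ (by omega)]
      _ ≤ ((1:ℝ)/2)^(A+2) * 2 := by
          have := pow_le_pow_of_le_one (by norm_num : (0:ℝ) ≤ 1/2) (by norm_num)
            (show A + 2 ≤ aseq b m (k+1+1) - A by omega)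
          linarith
      _ = ((1:ℝ)/2)^(A+1) := by rw [pow_succ, pow_succ]; ring
  have hcomb := distToInt_sub_le
    (((n * pnum c b m (k+1) : ℤ) : ℝ) / ((2^A : ℕ) : ℝ)) ((n:ℝ) * tailS b m (k+1))
  rw [← key] at hcomb
  have habs : |(n:ℝ) * tailS b m (k+1)| = (n:ℝ) * tailS b m (k+1) :=
    abs_of_nonneg (mul_nonneg (Nat.cast_nonneg n) (tailS_pos b m (k+1)).le)
  have h2A : 1 / ((2^A : ℕ) : ℝ) = ((1:ℝ)/2)^A := by
    push_cast
    rw [div_pow, one_pow]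
  have hfin : ((1:ℝ)/2)^A - ((1:ℝ)/2)^(A+1) = ((1:ℝ)/2)^(A+1) := by
    rw [pow_succ]; ring
  rw [habs] at hcomb
  rw [h2A] at hlow
  linarith

lemma nat_g_anti (a a' : ℕ) (h : a ≤ a') : (2*a'+4) * 2^a ≤ (2*a+4) * 2^a' := by
  induction a', h using Nat.le_induction with
  | base => exact le_refl _
  | succ a' ha ih =>

      have h1 : 2 ^ a ≤ 2 ^ a' := Nat.pow_le_pow_right (by norm_num) ha
      have h2 : 2 * 2^a ≤ (2*a+4) * 2^a' := Nat.mul_le_mul (by omega) h1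
      calc (2*(a'+1)+4) * 2^a = (2*a'+4) * 2^a + 2 * 2^a := by ring
        _ ≤ (2*a+4) * 2^a' + (2*a+4) * 2^a' := by omega
        _ = (2*a+4) * 2^(a'+1) := by ring

lemma g_anti (a a' : ℕ) (h : a ≤ a') :
    (2*(a':ℝ)+4) * ((1:ℝ)/2)^a' ≤ (2*(a:ℝ)+4) * ((1:ℝ)/2)^a := by
  have key : ((2*a'+4) * 2^a : ℝ) ≤ ((2*a+4) * 2^a' : ℝ) := by
    exact_mod_cast nat_g_anti a a' h
  have h2a : (0:ℝ) < 2^a := by positivity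
  have h2a' : (0:ℝ) < 2^a' := by positivity
  rw [div_pow, one_pow, div_pow, one_pow, mul_one_div, mul_one_div,
    div_le_div_iff₀ h2a' h2a]
  push_cast at key ⊢
  linarith

lemma nat_sq_le_two_pow (M : ℕ) (h : 4 ≤ M) : M^2 ≤ 2^M := by
  induction M, h using Nat.le_induction with
  | base => norm_num
  | succ M hM ih =>
      have h1 : 2*M + 1 ≤ M^2 := by nlinarith
      calc (M+1)^2 = M^2 + (2*M+1) := by ring
        _ ≤ M^2 + M^2 := by omega
        _ ≤ 2^M + 2^M := by omega
        _ = 2^(M+1) := by ring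

lemma g_small (ε : ℝ) (hε : 0 < ε) : ∃ M : ℕ, (2*(M:ℝ)+4) * ((1:ℝ)/2)^M ≤ ε := by
  obtain ⟨M0, hM0⟩ := exists_nat_gt (6/ε)
  refine ⟨max 4 M0, ?_⟩
  set M := max 4 M0 with hM
  have h4 : 4 ≤ M := le_max_left _ _
  have hMM : (6/ε) < M := lt_of_lt_of_le hM0 (by exact_mod_cast le_max_right 4 M0)
  have hMpos : (0:ℝ) < M := by positivity
  have hsq : ((M:ℝ))^2 ≤ 2^M := by exact_mod_cast nat_sq_le_two_pow M h4
  have h2M : (0:ℝ) < 2^M := by positivity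
  have hstep1 : (2*(M:ℝ)+4) * ((1:ℝ)/2)^M = (2*(M:ℝ)+4) / 2^M := by
    rw [div_pow, one_pow, mul_one_div]
  have h4' : (4:ℝ) ≤ M := by exact_mod_cast h4
  have hstep2 : (2*(M:ℝ)+4) / 2^M ≤ (6*(M:ℝ)) / (M:ℝ)^2 := by
    apply div_le_div₀ (by positivity) (by linarith) (by positivity) hsq
  have hstep3 : (6*(M:ℝ)) / (M:ℝ)^2 = 6 / M := by
    field_simp
  have hstep4 : 6 / (M:ℝ) ≤ ε := by
    rw [div_le_iff₀ hMpos]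
    have := (div_lt_iff₀ hε).mp hMM
    linarith
  rw [hstep1]
  calc (2*(M:ℝ)+4) / 2^M ≤ 6*(M:ℝ) / (M:ℝ)^2 := hstep2
    _ = 6 / M := hstep3
    _ ≤ ε := hstep4

lemma EReal_le_coe_of_forall (x : EReal) (y : ℝ)
    (h : ∀ ε : ℝ, 0 < ε → x ≤ ((y + ε : ℝ) : EReal)) : x ≤ (y : EReal) := by
  by_contra hc
  push_neg at hc
  obtain ⟨z, hz1, hz2⟩ := EReal.lt_iff_exists_real_btwn.mp hc
  have hyz : y < z := by exact_mod_cast hz1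
  have h1 := h (z - y) (by linarith)
  have h2 : ((y + (z - y) : ℝ) : EReal) = (z : EReal) := by norm_num
  rw [h2] at h1
  exact absurd (lt_of_le_of_lt h1 hz2) (lt_irrefl x)

/-- `β(ω) = limsup_{n→∞} (-log ‖nω‖_ℤ)/n ∈ [0,∞]`, with the convention `-log 0 = +∞`. -/
noncomputable def betaExp (ω : ℝ) : EReal :=
  Filter.limsup
    (fun n : ℕ => if distToInt (n * ω) = 0 then (⊤ : EReal)
      else ((-Real.log (distToInt (n * ω)) / n : ℝ) : EReal)) atTop

lemma betaExp_lnum (B : ℝ) (hB : 0 ≤ B) (c : ℤ) (m : ℕ) :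
    betaExp (lnum c (B / Real.log 2) m) = (B : EReal) := by
  classical
  have hlog : (0:ℝ) < Real.log 2 := Real.log_pos (by norm_num)
  set b := B / Real.log 2 with hbdef
  have hb0 : 0 ≤ b := div_nonneg hB hlog.le
  have hblog : b * Real.log 2 = B := div_mul_cancel₀ B hlog.ne'
  unfold betaExp
  apply le_antisymm
  · -- upper bound : limsup ≤ B
    apply EReal_le_coe_of_forall
    intro ε hε
    have hε' : 0 < ε / Real.log 2 := by positivity
    obtain ⟨M, hM⟩ := g_small (ε / Real.log 2) hε'
    apply limsup_le_of_le (by isBoundedDefault)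
    rw [eventually_atTop]
    refine ⟨2 ^ aseq b m M, fun n hn => ?_⟩
    have hMn : M ≤ n :=
      le_trans (le_trans (le_aseq b m M) (Nat.lt_two_pow_self (n := _)).le) hn
    set k := Nat.findGreatest (fun j => 2 ^ aseq b m j ≤ n) n with hkdef
    have hkM : M ≤ k := Nat.le_findGreatest (P := fun j => 2 ^ aseq b m j ≤ n) hMn hn
    have hk1 : 2 ^ aseq b m k ≤ n := Nat.findGreatest_spec (P := fun j => 2 ^ aseq b m j ≤ n) hMn hn
    have hk2 : n < 2 ^ aseq b m (k+1) := by
      by_cases hcase : k + 1 ≤ n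
      · by_contra hcon
        push_neg at hcon
        exact (Nat.findGreatest_is_greatest (lt_add_one k) hcase) hcon
      · push_neg at hcase
        have e1 := le_aseq b m (k+1)
        have e2 := Nat.lt_two_pow_self (n := aseq b m (k+1))
        omega
    have hn1 : 1 ≤ n := le_trans Nat.one_le_two_pow hn
    have hdlb := estB c b m k n hn1 hk2
    have hd0 : (0:ℝ) < distToInt ((n:ℝ) * lnum c b m) :=
      lt_of_lt_of_le (by positivity) hdlb
    rw [if_neg (ne_of_gt hd0), EReal.coe_le_coe_iff]
    -- real computation
    set d := distToInt ((n:ℝ) * lnum c b m) with hd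
    set A1 := aseq b m (k+1) with hA1
    set A0 := aseq b m k with hA0
    have hlogd : -Real.log d ≤ ((A1:ℝ) + 1) * Real.log 2 := by
      have h1 : Real.log ((1/2:ℝ)^(A1+1)) ≤ Real.log d :=
        Real.log_le_log (by positivity) hdlb
      have h2 : Real.log ((1/2:ℝ)^(A1+1)) = -(((A1:ℝ)+1) * Real.log 2) := by
        rw [one_div, log_pow, log_inv]
        push_cast
        ring
      linarith
    have hnA0 : (2:ℝ)^A0 ≤ (n:ℝ) := by exact_mod_cast hk1
    have hdiv : -Real.log d / n ≤ (((A1:ℝ) + 1) * Real.log 2) / 2^A0 :=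
      div_le_div₀ (by positivity) hlogd (by positivity) hnA0
    have hceil : (⌈b * (2:ℝ)^A0⌉₊ : ℝ) < b * 2^A0 + 1 :=
      Nat.ceil_lt_add_one (by positivity)
    have hA1val : A1 = ⌈b * (2:ℝ)^A0⌉₊ + 2*A0 + 2 := aseq_succ b m k
    have hA1le : (A1:ℝ) + 1 ≤ b * 2^A0 + (2*(A0:ℝ) + 4) := by
      rw [hA1val]
      push_cast
      linarith
    have hgA : (2*(A0:ℝ)+4) * ((1:ℝ)/2)^A0 ≤ ε / Real.log 2 :=
      le_trans (g_anti M A0 (le_trans hkM (le_aseq b m k))) hM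
    have hkey : (((A1:ℝ) + 1) * Real.log 2) / 2^A0 ≤ B + ε := by
      have e1 : ((b * 2^A0 + (2*(A0:ℝ) + 4)) * Real.log 2) / 2^A0
          = b * Real.log 2 + ((2*(A0:ℝ)+4) * ((1:ℝ)/2)^A0) * Real.log 2 := by
        rw [div_pow, one_pow]
        field_simp
      have e2 : (((A1:ℝ) + 1) * Real.log 2) / 2^A0
          ≤ ((b * 2^A0 + (2*(A0:ℝ) + 4)) * Real.log 2) / 2^A0 := by
        gcongr
      rw [e1] at e2
      have e3 : ((2*(A0:ℝ)+4) * ((1:ℝ)/2)^A0) * Real.log 2 ≤ (ε / Real.log 2) * Real.log 2 :=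
        mul_le_mul_of_nonneg_right hgA hlog.le
      have e4 : (ε / Real.log 2) * Real.log 2 = ε := div_mul_cancel₀ ε hlog.ne'
      rw [hblog] at e2
      linarith
    linarith
  · -- lower bound : B ≤ limsup
    refine le_limsup_of_frequently_le ?_ (by isBoundedDefault)
    rw [frequently_atTop]
    intro N
    refine ⟨2 ^ aseq b m N, ?_, ?_⟩
    · calc N ≤ aseq b m N := le_aseq b m N
        _ ≤ 2 ^ aseq b m N := (Nat.lt_two_pow_self (n := _)).le
    · have hcast : (((2 ^ aseq b m N : ℕ)):ℝ) = (2:ℝ)^(aseq b m N) := by push_cast; ring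
      have hval : distToInt (((2 ^ aseq b m N : ℕ)):ℝ) * lnum c b m = 0 ∨ True := Or.inr trivial
      have hvalue : distToInt ((((2 ^ aseq b m N : ℕ)):ℝ) * lnum c b m)
          = (2:ℝ)^(aseq b m N) * tailS b m N := by
        rw [hcast]
        exact estA c b m N
      have hpos : (0:ℝ) < distToInt ((((2 ^ aseq b m N : ℕ)):ℝ) * lnum c b m) := by
        rw [hvalue]
        exact mul_pos (by positivity) (tailS_pos b m N)
      rw [if_neg (ne_of_gt hpos), EReal.coe_le_coe_iff]
      set D := aseq b m (N+1) - aseq b m N - 1 with hD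
      have hub : distToInt ((((2 ^ aseq b m N : ℕ)):ℝ) * lnum c b m) ≤ ((1:ℝ)/2)^D := by
        rw [hvalue]
        exact qtail_ub c b m N
      have hlogd : (D:ℝ) * Real.log 2
          ≤ -Real.log (distToInt ((((2 ^ aseq b m N : ℕ)):ℝ) * lnum c b m)) := by
        have h1 := Real.log_le_log hpos hub
        have h2 : Real.log ((1/2:ℝ)^D) = -((D:ℝ) * Real.log 2) := by
          rw [one_div, log_pow, log_inv]
          push_cast
          ring
        linarith
      have hge : b * (2:ℝ)^(aseq b m N) ≤ (D:ℝ) := by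
        have hDval : D = ⌈b * (2:ℝ)^(aseq b m N)⌉₊ + aseq b m N + 1 := by
          rw [hD, aseq_succ]
          omega
        rw [hDval]
        push_cast
        have := Nat.le_ceil (b * (2:ℝ)^(aseq b m N))
        have h0 : (0:ℝ) ≤ (aseq b m N : ℝ) := by positivity
        linarith
      have hn0 : (0:ℝ) < (((2 ^ aseq b m N : ℕ)):ℝ) := by rw [hcast]; positivity
      rw [le_div_iff₀ hn0]
      calc B * (((2 ^ aseq b m N : ℕ)):ℝ)
          = (b * (2:ℝ)^(aseq b m N)) * Real.log 2 := by rw [← hblog, hcast]; ring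
        _ ≤ (D:ℝ) * Real.log 2 := mul_le_mul_of_nonneg_right hge hlog.le
        _ ≤ -Real.log (distToInt ((((2 ^ aseq b m N : ℕ)):ℝ) * lnum c b m)) := hlogd

lemma betaExp_dyadic (c : ℤ) (m : ℕ) : betaExp ((c:ℝ) * ((1:ℝ)/2)^m) = ⊤ := by
  apply top_le_iff.mp
  unfold betaExp
  refine le_limsup_of_frequently_le ?_ (by isBoundedDefault)
  rw [frequently_atTop]
  intro N
  refine ⟨2^m * N, ?_, ?_⟩
  · calc N = 1 * N := (one_mul N).symm
      _ ≤ 2^m * N := Nat.mul_le_mul_right N Nat.one_le_two_pow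
  · have hval : ((2^m * N : ℕ):ℝ) * ((c:ℝ) * ((1:ℝ)/2)^m) = ((c * N : ℤ):ℝ) := by
      have h1 : ((2^m * N : ℕ):ℝ) = (2:ℝ)^m * (N:ℕ) := by push_cast; ring
      rw [h1]
      calc (2:ℝ)^m * (N:ℕ) * ((c:ℝ) * ((1:ℝ)/2)^m)
          = ((2:ℝ)^m * ((1:ℝ)/2)^m) * ((N:ℕ) * (c:ℝ)) := by ring
        _ = ((c * N : ℤ):ℝ) := by rw [pow_mul_pow_inv]; push_cast; ring
    rw [hval, distToInt_intCast, if_pos rfl]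

lemma dyadic_close (x : ℝ) (m : ℕ) :
    |(⌊x * 2^m⌋ : ℝ) * ((1:ℝ)/2)^m - x| ≤ ((1:ℝ)/2)^m := by
  have h1 : (⌊x * 2^m⌋ : ℝ) ≤ x * 2^m := Int.floor_le _
  have h2 : x * 2^m - 1 < (⌊x * 2^m⌋ : ℝ) := Int.sub_one_lt_floor _
  have hkey : (⌊x * 2^m⌋ : ℝ) * ((1:ℝ)/2)^m - x
      = ((⌊x * 2^m⌋ : ℝ) - x * 2^m) * ((1:ℝ)/2)^m := by
    linear_combination x * pow_mul_pow_inv m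
  rw [hkey, abs_mul, abs_of_nonneg (by positivity : (0:ℝ) ≤ ((1:ℝ)/2)^m)]
  have h3 : |(⌊x * 2^m⌋ : ℝ) - x * 2^m| ≤ 1 := by
    rw [abs_le]
    constructor <;> linarith
  nlinarith [pow_nonneg (by norm_num : (0:ℝ) ≤ 1/2) m]

/-- For every `β₀ ∈ [0,∞]` (extended reals), the level set `{ω : β(ω) = β₀}` is dense in `ℝ`. -/
theorem statement10 (β₀ : EReal) (hβ₀ : 0 ≤ β₀) :
    Dense {ω : ℝ | betaExp ω = β₀} := by
  rw [Metric.dense_iff]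
  intro x r hr
  rcases eq_or_ne β₀ ⊤ with rfl | hne
  · -- top case : dyadic rationals
    obtain ⟨m, hm⟩ := exists_pow_lt_of_lt_one hr (by norm_num : (1:ℝ)/2 < 1)
    refine ⟨(⌊x * 2^m⌋ : ℝ) * ((1:ℝ)/2)^m, ?_, ?_⟩
    · rw [Metric.mem_ball, Real.dist_eq]
      calc |(⌊x * 2^m⌋ : ℝ) * ((1:ℝ)/2)^m - x| ≤ ((1:ℝ)/2)^m := dyadic_close x m
        _ < r := hm
    · exact betaExp_dyadic ⌊x * 2^m⌋ m
  · -- finite case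
    have hbot : β₀ ≠ ⊥ := by
      intro h
      rw [h] at hβ₀
      simp at hβ₀
    set B := β₀.toReal with hBdef
    have hcoe : (B : EReal) = β₀ := EReal.coe_toReal hne hbot
    have hB : 0 ≤ B := by
      rw [← hcoe] at hβ₀
      exact_mod_cast hβ₀
    have hr2 : 0 < r/2 := by linarith
    obtain ⟨m, hm⟩ := exists_pow_lt_of_lt_one hr2 (by norm_num : (1:ℝ)/2 < 1)
    set b := B / Real.log 2 with hb
    set c := ⌊x * 2^m⌋ with hc
    refine ⟨lnum c b m, ?_, ?_⟩
    · rw [Metric.mem_ball, Real.dist_eq]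
      have htail : tailS b m 0 ≤ ((1:ℝ)/2)^m := by
        have h1 := tailS_ub b m 0
        have h2 : 2*m + 2 ≤ aseq b m 1 := aseq_gap b m 0
        have h3 : ((1:ℝ)/2)^(aseq b m 1) ≤ ((1:ℝ)/2)^(2*m+2) :=
          pow_le_pow_of_le_one (by norm_num) (by norm_num) h2
        have h4 : ((1:ℝ)/2)^(2*m+2) * 2 ≤ ((1:ℝ)/2)^m := by
          have e : ((1:ℝ)/2)^(2*m+2) * 2 = ((1:ℝ)/2)^(2*m+1) := by
            rw [pow_succ]; ring
          rw [e]
          exact pow_le_pow_of_le_one (by norm_num) (by norm_num) (by omega)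
        linarith
      have hclose := dyadic_close x m
      have : |lnum c b m - x| ≤ ((1:ℝ)/2)^m + ((1:ℝ)/2)^m := by
        rw [lnum]
        have htp := tailS_pos b m 0
        calc |(c:ℝ) * ((1:ℝ)/2)^m + tailS b m 0 - x|
            ≤ |(c:ℝ) * ((1:ℝ)/2)^m - x| + |tailS b m 0| := by
              have := abs_add_le ((c:ℝ) * ((1:ℝ)/2)^m - x) (tailS b m 0)
              calc |(c:ℝ) * ((1:ℝ)/2)^m + tailS b m 0 - x|
                  = |((c:ℝ) * ((1:ℝ)/2)^m - x) + tailS b m 0| := by ring_nf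
                _ ≤ _ := this
          _ ≤ ((1:ℝ)/2)^m + ((1:ℝ)/2)^m := by
              rw [abs_of_pos htp]
              exact add_le_add hclose htail
      linarith
    · show betaExp (lnum c b m) = β₀
      rw [hb, betaExp_lnum B hB c m]
      exact hcoe
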